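/- There is an infinite antichain of labelled paths for the tree-embedding order: for n ≥ 1 let s_n be the path with n+2 vertices where the first edge is labelled p_r, all subsequent edges are labelled p_ℓ, all vertices are labelled 0 except the last which is labelled p_ℓ. Then for all i ≠ j, s_i and s_j are incomparable under the embedding order requiring edges to map to edges with greater-or-equal labels. -/
import Mathlib


/-- Finite rooted trees with vertex labels in `L` and edge labels in `E`. -/
inductive LTree (L E : Type) : Type where
  | node : L → List (E × LTree L E) → LTree L E

mutual
  /-- Root-preserving label-increasing embedding of labelled trees: the roots are
  matched, and the children of the root are injectively matched to children of
  the image with edge labels increased, recursively. -/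
  inductive StrongEmb {L E : Type} (lL : L → L → Prop) (lE : E → E → Prop) :
      LTree L E → LTree L E → Prop where
    | node {a b : L} {ts us : List (E × LTree L E)} :
        lL a b → StrongEmbList lL lE ts us →
        StrongEmb lL lE (.node a ts) (.node b us)

  /-- Injective matching of a list of labelled subtrees into another list. -/
  inductive StrongEmbList {L E : Type} (lL : L → L → Prop) (lE : E → E → Prop) :
      List (E × LTree L E) → List (E × LTree L E) → Prop where
    | nil (us : List (E × LTree L E)) : StrongEmbList lL lE [] us
    | cons {t : E × LTree L E} {ts : List (E × LTree L E)}
        {us₁ : List (E × LTree L E)} {u : E × LTree L E} {us₂ : List (E × LTree L E)} :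
        lE t.1 u.1 → StrongEmb lL lE t.2 u.2 →
        StrongEmbList lL lE ts (us₁ ++ us₂) →
        StrongEmbList lL lE (t :: ts) (us₁ ++ u :: us₂)
end

/-- `Subtree u s` holds iff `u` is a (maximal) subtree of `s`. -/
inductive Subtree {L E : Type} : LTree L E → LTree L E → Prop where
  | refl (s : LTree L E) : Subtree s s
  | child {s : LTree L E} {e : E} {u : LTree L E} {b : L}
      {us : List (E × LTree L E)} :
      (e, u) ∈ us → Subtree s u → Subtree s (.node b us)

/-- The embedding order on labelled trees: `s ≤ s'` iff there is an injective
label-increasing embedding of `s` onto (a subtree of) `s'`. -/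
def Emb {L E : Type} (lL : L → L → Prop) (lE : E → E → Prop)
    (s s' : LTree L E) : Prop :=
  ∃ u : LTree L E, Subtree u s' ∧ StrongEmb lL lE s u

/-- Markings over the two places `{p_r, p_ℓ}`, ordered componentwise. -/
def leM (x y : ℕ × ℕ) : Prop := x.1 ≤ y.1 ∧ x.2 ≤ y.2

/-- The marking `p_r`. -/
def pr : ℕ × ℕ := (1, 0)

/-- The marking `p_ℓ`. -/
def pl : ℕ × ℕ := (0, 1)

/-- Chain of `k` edges labelled `p_ℓ`, internal vertices labelled `0`,
final vertex labelled `p_ℓ`. -/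
def tail : ℕ → LTree (ℕ × ℕ) (ℕ × ℕ)
  | 0 => .node pl []
  | k + 1 => .node (0, 0) [(pl, tail k)]

/-- The path `s_n`: `n + 2` vertices, first edge labelled `p_r`, the remaining
`n` edges labelled `p_ℓ`, all vertices labelled `0` except the last labelled
`p_ℓ`. -/
def sPath (n : ℕ) : LTree (ℕ × ℕ) (ℕ × ℕ) := .node (0, 0) [(pr, tail n)]

lemma embList_nil_target {L E : Type} {lL : L → L → Prop} {lE : E → E → Prop}
    {t : E × LTree L E} {ts us : List (E × LTree L E)}
    (h : StrongEmbList lL lE (t :: ts) us) (hus : us = []) : False := by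
  cases h with
  | cons h1 h2 h3 => simp at hus

lemma embList_singleton {L E : Type} {lL : L → L → Prop} {lE : E → E → Prop}
    {t : E × LTree L E} {ts us : List (E × LTree L E)} {v : E × LTree L E}
    (h : StrongEmbList lL lE (t :: ts) us) (hus : us = [v]) :
    lE t.1 v.1 ∧ StrongEmb lL lE t.2 v.2 := by
  cases h with
  | @cons _ _ us₁ u us₂ h1 h2 h3 =>
    cases us₁ with
    | nil =>
      simp at hus
      obtain ⟨h4, h5⟩ := hus
      rw [h4] at h1 h2
      exact ⟨h1, h2⟩
    | cons a l => simp at hus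

lemma tail_emb_eq : ∀ i j, StrongEmb leM leM (tail i) (tail j) → i = j := by
  intro i
  induction i with
  | zero =>
    intro j h
    cases j with
    | zero => rfl
    | succ j =>
      exfalso
      rw [tail, tail] at h
      cases h with
      | node hl _ => exact absurd hl.2 (by simp [pl])
  | succ i ih =>
    intro j h
    cases j with
    | zero =>
      exfalso
      rw [tail, tail] at h
      cases h with
      | node _ hlist => exact embList_nil_target hlist rfl
    | succ j =>
      rw [tail, tail] at h
      cases h with
      | node _ hlist =>
        have := (embList_singleton hlist rfl).2
        exact congrArg Nat.succ (ih j this)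

lemma subtree_tail : ∀ k : ℕ, ∀ {u : LTree (ℕ × ℕ) (ℕ × ℕ)}, Subtree u (tail k) →
    ∃ m, m ≤ k ∧ u = tail m := by
  intro k
  induction k with
  | zero =>
    intro u h
    rw [tail] at h
    cases h with
    | refl => exact ⟨0, le_refl _, by rw [tail]⟩
    | child hmem _ => simp at hmem
  | succ k ih =>
    intro u h
    rw [tail] at h
    cases h with
    | refl => exact ⟨k + 1, le_refl _, by rw [tail]⟩
    | child hmem hsub =>
      simp at hmem
      obtain ⟨m, hm, rfl⟩ := ih (hmem.2 ▸ hsub)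
      exact ⟨m, le_trans hm (Nat.le_succ k), rfl⟩

/-- The family `{s_n}_{n ≥ 1}` is an infinite antichain for the tree-embedding
order: for `i ≠ j`, `s_i` and `s_j` are incomparable. -/
theorem sPath_antichain :
    ∀ i j : ℕ, 1 ≤ i → 1 ≤ j → i ≠ j → ¬ Emb leM leM (sPath i) (sPath j) := by
  intro i j _ _ hij ⟨u, hsub, hemb⟩
  have hcase : u = sPath j ∨ ∃ m, m ≤ j ∧ u = tail m := by
    rw [sPath] at hsub
    cases hsub with
    | refl => exact Or.inl rfl
    | child hmem hsub' =>
      simp at hmem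
      exact Or.inr (subtree_tail j (hmem.2 ▸ hsub'))
  rcases hcase with rfl | ⟨m, hm, rfl⟩
  · rw [sPath, sPath] at hemb
    cases hemb with
    | node _ hlist =>
      have := (embList_singleton hlist rfl).2
      exact hij (tail_emb_eq _ _ this)
  · cases m with
    | zero =>
      rw [sPath, tail] at hemb
      cases hemb with
      | node _ hlist => exact embList_nil_target hlist rfl
    | succ m =>
      rw [sPath, tail] at hemb
      cases hemb with
      | node _ hlist =>
        have := (embList_singleton hlist rfl).1
        exact absurd this.1 (by simp [pr, pl])
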